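/- For every n and k, the number of lattice paths from (0,0) to (⌈n/2⌉, ⌊n/2⌋) with steps N = (0,1) and E = (1,0) that have exactly k peaks (occurrences of NE) equals C(⌈n/2⌉, k) · C(⌊n/2⌋, k). -/

import Mathlib

open Finset

-- A lattice path with unit north and east steps is encoded as a list of booleans:
-- `true` is an N = (0,1) step and `false` is an E = (1,0) step.

/-- The height (#N − #E) of the path after its first t steps. -/
def ht (w : List Bool) (t : ℕ) : ℤ :=
  ((w.take t).count true : ℤ) - ((w.take t).count false : ℤ)

/-- A Dyck path prefix: a path that never goes below the diagonal y = x. -/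
def IsPrefixPath (w : List Bool) : Prop := ∀ t, 0 ≤ ht w t

/-- The peak set of a path: labels (1,…,length−1) of vertices that lie in the middle
of an NE factor. -/
def peakSet (w : List Bool) : Finset ℕ :=
  (Finset.Ico 1 w.length).filter
    (fun i => w.getD (i - 1) false = true ∧ w.getD i true = false)

lemma peakSet_cons (c : Bool) (w : List Bool) :
    peakSet (c :: w) = ((peakSet w).image (· + 1)) ∪
      (if c = true ∧ w.getD 0 true = false then {1} else ∅) := by
  ext i
  simp only [peakSet, Finset.mem_union, Finset.mem_image, Finset.mem_filter,
    Finset.mem_Ico, List.length_cons]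
  constructor
  · rintro ⟨⟨h1, h2⟩, hc1, hc2⟩
    match i with
    | 1 =>
      right
      have hc1' : c = true := by simpa using hc1
      have hc2' : w.getD 0 true = false := by simpa using hc2
      rw [List.getD_eq_getElem?_getD] at hc2'
      simp [hc1', hc2']
    | (j+2) =>
      left
      refine ⟨j+1, ⟨⟨by omega, by omega⟩, ?_, ?_⟩, rfl⟩
      · simpa using hc1
      · simpa using hc2
  · rintro (⟨j, ⟨⟨hj1, hj2⟩, hc1, hc2⟩, rfl⟩ | h)
    · match j, hj1 with
      | (j'+1), _ =>
        refine ⟨⟨by omega, by omega⟩, ?_, ?_⟩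
        · simpa using hc1
        · simpa using hc2
    · by_cases hcond : c = true ∧ w.getD 0 true = false
      · rw [if_pos hcond] at h
        simp only [Finset.mem_singleton] at h
        subst h
        have hw : w ≠ [] := by
          rintro rfl
          simp at hcond
        refine ⟨⟨le_refl 1, ?_⟩, ?_, ?_⟩
        · have := List.length_pos_iff.mpr hw; omega
        · simpa using hcond.1
        · simpa using hcond.2
      · rw [if_neg hcond] at h
        simp at h

lemma card_peakSet_cons (c : Bool) (w : List Bool) :
    (peakSet (c :: w)).card =
      (peakSet w).card + (if c = true ∧ w.getD 0 true = false then 1 else 0) := by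
  rw [peakSet_cons, Finset.card_union_of_disjoint, Finset.card_image_of_injective _
    (add_left_injective 1)]
  · congr 1
    split <;> simp
  · rw [Finset.disjoint_right]
    intro x hx
    split at hx
    · simp only [Finset.mem_singleton] at hx
      subst hx
      simp only [Finset.mem_image, not_exists, not_and]
      intro y hy
      have : 1 ≤ y := by
        have := (Finset.mem_filter.mp hy).1
        exact (Finset.mem_Ico.mp this).1
      omega
    · simp at hx
def allW : ℕ → Finset (List Bool)
  | 0 => {[]}
  | n+1 => (allW n).image (List.cons true) ∪ (allW n).image (List.cons false)

lemma mem_allW {n : ℕ} {w : List Bool} : w ∈ allW n ↔ w.length = n := by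
  induction n generalizing w with
  | zero => cases w <;> simp [allW]
  | succ n ih =>
    cases w with
    | nil => simp [allW]
    | cons c t =>
      cases c <;> simp [allW, ih]

lemma card_filter_allW_succ (n : ℕ) (p : List Bool → Prop) [DecidablePred p] :
    ((allW (n+1)).filter p).card =
      ((allW n).filter (fun w => p (true :: w))).card +
      ((allW n).filter (fun w => p (false :: w))).card := by
  show ((((allW n).image (List.cons true)) ∪ ((allW n).image (List.cons false))).filter p).card = _
  rw [Finset.filter_union, Finset.card_union_of_disjoint, Finset.filter_image,
    Finset.filter_image, Finset.card_image_of_injective _ (List.cons_injective),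
    Finset.card_image_of_injective _ (List.cons_injective)]
  rw [Finset.disjoint_left]
  intro x hx hy
  rw [Finset.filter_image] at hx hy
  simp only [Finset.mem_image] at hx hy
  obtain ⟨u, _, rfl⟩ := hx
  obtain ⟨v, _, hv⟩ := hy
  simp at hv

lemma card_filter_and_split (s : Finset (List Bool)) (p q : List Bool → Prop)
    [DecidablePred p] [DecidablePred q] :
    (s.filter p).card = (s.filter (fun w => p w ∧ q w)).card +
      (s.filter (fun w => p w ∧ ¬ q w)).card := by
  rw [← Finset.filter_filter, ← Finset.filter_filter,
    Finset.card_filter_add_card_filter_not]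

lemma getD_false_of_all (l : List Bool) (h : ∀ x ∈ l, x = false) (j : ℕ) :
    l.getD j false = false := by
  rcases lt_or_ge j l.length with hj | hj
  · rw [List.getD_eq_getElem _ _ hj]
    exact h _ (List.getElem_mem hj)
  · rw [List.getD_eq_default _ _ hj]

lemma getD_true_of_all (l : List Bool) (h : ∀ x ∈ l, x = true) (j : ℕ) :
    l.getD j true = true := by
  rcases lt_or_ge j l.length with hj | hj
  · rw [List.getD_eq_getElem _ _ hj]
    exact h _ (List.getElem_mem hj)
  · rw [List.getD_eq_default _ _ hj]

lemma peakSet_all_false (l : List Bool) (h : ∀ x ∈ l, x = false) : peakSet l = ∅ := by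
  rw [peakSet, Finset.filter_false_of_mem]
  intro i _
  rw [getD_false_of_all l h]
  simp

lemma peakSet_all_true (l : List Bool) (h : ∀ x ∈ l, x = true) : peakSet l = ∅ := by
  rw [peakSet, Finset.filter_false_of_mem]
  intro i _
  rw [getD_true_of_all l h]
  simp

lemma cardA_azero (b k : ℕ) :
    ((allW b).filter (fun w => w.count true = 0 ∧ (peakSet w).card = k)).card =
      if k = 0 then 1 else 0 := by
  have hrep : ∀ w : List Bool, w ∈ allW b → w.count true = 0 → w = List.replicate b false := by
    intro w hw hc
    rw [List.eq_replicate_iff]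
    refine ⟨mem_allW.mp hw, ?_⟩
    intro x hx
    cases x
    · rfl
    · exact absurd hx (List.count_eq_zero.mp hc)
  split
  · next hk =>
    subst hk
    rw [Finset.card_eq_one]
    refine ⟨List.replicate b false, ?_⟩
    ext w
    simp only [Finset.mem_filter, Finset.mem_singleton]
    constructor
    · rintro ⟨hw, hc, _⟩; exact hrep w hw hc
    · rintro rfl
      refine ⟨mem_allW.mpr (by simp), by simp [List.count_replicate], ?_⟩
      rw [peakSet_all_false _ (by simp)]
      simp
  · next hk =>
    rw [Finset.card_eq_zero]
    rw [Finset.filter_eq_empty_iff]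
    rintro w hw ⟨hc, hpk⟩
    have := hrep w hw hc
    subst this
    rw [peakSet_all_false _ (by simp)] at hpk
    simp at hpk
    exact hk hpk.symm

lemma cardA_bzero (a k : ℕ) :
    ((allW a).filter (fun w => w.count true = a ∧ (peakSet w).card = k)).card =
      if k = 0 then 1 else 0 := by
  have hrep : ∀ w : List Bool, w ∈ allW a → w.count true = a → w = List.replicate a true := by
    intro w hw hc
    rw [List.eq_replicate_iff]
    have hl := mem_allW.mp hw
    refine ⟨hl, ?_⟩
    intro x hx
    cases x
    · exfalso
      have := List.count_eq_length.mp (by rw [hc, hl])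
      exact Bool.false_ne_true ((this false hx).symm)
    · rfl
  split
  · next hk =>
    subst hk
    rw [Finset.card_eq_one]
    refine ⟨List.replicate a true, ?_⟩
    ext w
    simp only [Finset.mem_filter, Finset.mem_singleton]
    constructor
    · rintro ⟨hw, hc, _⟩; exact hrep w hw hc
    · rintro rfl
      refine ⟨mem_allW.mpr (by simp), by simp [List.count_replicate], ?_⟩
      rw [peakSet_all_true _ (by simp)]
      simp
  · next hk =>
    rw [Finset.card_eq_zero, Finset.filter_eq_empty_iff]
    rintro w hw ⟨hc, hpk⟩
    have := hrep w hw hc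
    subst this
    rw [peakSet_all_true _ (by simp)] at hpk
    simp at hpk
    exact hk hpk.symm

lemma cardAT_azero (b k : ℕ) :
    ((allW b).filter (fun w =>
      w.count true = 0 ∧ (peakSet w).card = k ∧ w.getD 0 false = true)).card = 0 := by
  rw [Finset.card_eq_zero, Finset.filter_eq_empty_iff]
  rintro w hw ⟨hc, _, hd⟩
  have : true ∉ w := List.count_eq_zero.mp hc
  cases w with
  | nil => simp at hd
  | cons x t =>
    simp only [List.getD_cons_zero] at hd
    subst hd
    exact this List.mem_cons_self

lemma cardAT_bzero (a k : ℕ) :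
    ((allW a).filter (fun w =>
      w.count true = a ∧ (peakSet w).card = k ∧ w.getD 0 false = true)).card =
      if k = 0 ∧ 1 ≤ a then 1 else 0 := by
  have hrep : ∀ w : List Bool, w ∈ allW a → w.count true = a → w = List.replicate a true := by
    intro w hw hc
    rw [List.eq_replicate_iff]
    have hl := mem_allW.mp hw
    refine ⟨hl, ?_⟩
    intro x hx
    cases x
    · exfalso
      have := List.count_eq_length.mp (by rw [hc, hl])
      exact Bool.false_ne_true ((this false hx).symm)
    · rfl
  split
  · next hk =>
    obtain ⟨rfl, ha⟩ := hk
    rw [Finset.card_eq_one]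
    refine ⟨List.replicate a true, ?_⟩
    ext w
    simp only [Finset.mem_filter, Finset.mem_singleton]
    constructor
    · rintro ⟨hw, hc, _⟩; exact hrep w hw hc
    · rintro rfl
      refine ⟨mem_allW.mpr (by simp), by simp [List.count_replicate], ?_, ?_⟩
      · rw [peakSet_all_true _ (by simp)]; simp
      · obtain ⟨a', rfl⟩ : ∃ a', a = a' + 1 := ⟨a - 1, by omega⟩
        simp [List.replicate_succ]
  · next hk =>
    rw [Finset.card_eq_zero, Finset.filter_eq_empty_iff]
    rintro w hw ⟨hc, hpk, hd⟩
    have hrw := hrep w hw hc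
    subst hrw
    rw [peakSet_all_true _ (by simp)] at hpk
    simp only [Finset.card_empty] at hpk
    apply hk
    constructor
    · omega
    · by_contra ha
      have : a = 0 := by omega
      subst this
      simp at hd

def Tt (a b k : ℕ) : ℕ :=
  if b = 0 then (if k = 0 ∧ 1 ≤ a then 1 else 0)
  else if k = 0 then 0 else Nat.choose a k * Nat.choose (b-1) (k-1)

lemma main : ∀ (n : ℕ) (a b k : ℕ), a + b = n →
    ((allW (a+b)).filter (fun w => w.count true = a ∧ (peakSet w).card = k)).card
      = Nat.choose a k * Nat.choose b k ∧
    ((allW (a+b)).filter (fun w =>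
        w.count true = a ∧ (peakSet w).card = k ∧ w.getD 0 false = true)).card
      = Tt a b k := by
  intro n
  induction n using Nat.strong_induction_on with
  | _ n ih =>
    intro a b k hn
    match a, b with
    | 0, b =>
      rw [Nat.zero_add]
      constructor
      · rw [cardA_azero]
        cases k <;> simp
      · rw [cardAT_azero]
        unfold Tt
        rcases Nat.eq_zero_or_pos b with rfl | hb
        · simp
        · rw [if_neg (by omega)]
          cases k with
          | zero => simp
          | succ j => simp
    | (a'+1), 0 =>
      constructor
      · rw [cardA_bzero]
        cases k <;> simp
      · rw [cardAT_bzero]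
        unfold Tt
        simp
    | (a'+1), (b'+1) =>
      have hmn : a' + 1 + (b' + 1) = (a' + b' + 1) + 1 := by omega
      rw [hmn]
      set m := a' + b' + 1 with hm'
      have hm_lt : m < n := by omega
      have hm1_lt : a' + b' < n := by omega
      -- the key computation for the "true :: w" branch
      have key : ((allW m).filter (fun w =>
            (true :: w).count true = a'+1 ∧ (peakSet (true :: w)).card = k)).card
          = (if k = 0 then 0 else Nat.choose a' (k-1) * Nat.choose b' (k-1))
            + Tt a' (b'+1) k := by
        have e1 : ((allW m).filter (fun w =>
              (true :: w).count true = a'+1 ∧ (peakSet (true :: w)).card = k))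
            = (allW m).filter (fun w => w.count true = a' ∧
                (peakSet w).card + (if w.getD 0 true = false then 1 else 0) = k) := by
          apply Finset.filter_congr
          intro w _
          rw [card_peakSet_cons]
          simp only [List.count_cons_self, true_and]
          constructor
          · rintro ⟨h1, h2⟩; exact ⟨by omega, h2⟩
          · rintro ⟨h1, h2⟩; exact ⟨by omega, h2⟩
        rw [e1, card_filter_and_split _ _ (fun w => w.getD 0 true = false)]
        -- second summand: words not starting with false
        have e3 : ((allW m).filter (fun w => (w.count true = a' ∧
              (peakSet w).card + (if w.getD 0 true = false then 1 else 0) = k) ∧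
              ¬ (w.getD 0 true = false)))
            = (allW m).filter (fun w => w.count true = a' ∧
                (peakSet w).card = k ∧ w.getD 0 false = true) := by
          apply Finset.filter_congr
          intro w hw
          have hwne : w ≠ [] := by
            intro h
            subst h
            have h0 := mem_allW.mp hw
            rw [List.length_nil] at h0
            omega
          obtain ⟨x, t, rfl⟩ : ∃ x t, w = x :: t := by
            cases w with
            | nil => exact absurd rfl hwne
            | cons x t => exact ⟨x, t, rfl⟩
          simp only [List.getD_cons_zero]
          cases x <;> simp
        rw [e3]
        have ih2 := (ih m hm_lt a' (b'+1) k (by omega)).2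
        rw [show a' + (b'+1) = m by omega] at ih2
        rw [ih2]
        congr 1
        -- first summand: words starting with false
        cases k with
        | zero =>
          rw [if_pos rfl, Finset.card_eq_zero, Finset.filter_eq_empty_iff]
          rintro w hw ⟨⟨h1, h2⟩, h3⟩
          rw [if_pos h3] at h2
          omega
        | succ j =>
          rw [if_neg (Nat.succ_ne_zero j)]
          have e2 : ((allW m).filter (fun w => (w.count true = a' ∧
                (peakSet w).card + (if w.getD 0 true = false then 1 else 0) = j+1) ∧
                w.getD 0 true = false))
              = (allW m).filter (fun w => (w.count true = a' ∧
                  (peakSet w).card = j) ∧ w.getD 0 true = false) := by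
            apply Finset.filter_congr
            intro w _
            constructor
            · rintro ⟨⟨h1, h2⟩, h3⟩
              rw [if_pos h3] at h2
              exact ⟨⟨h1, by omega⟩, h3⟩
            · rintro ⟨⟨h1, h2⟩, h3⟩
              refine ⟨⟨h1, ?_⟩, h3⟩
              rw [if_pos h3]
              omega
          rw [e2]
          -- strip the leading false
          rw [show m = (a' + b') + 1 from rfl, card_filter_allW_succ]
          have etrue : ((allW (a'+b')).filter (fun w =>
                ((true :: w).count true = a' ∧ (peakSet (true :: w)).card = j) ∧
                (true :: w).getD 0 true = false)) = ∅ := by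
            rw [Finset.filter_eq_empty_iff]
            rintro w _ ⟨_, h3⟩
            simp at h3
          have efalse : ((allW (a'+b')).filter (fun w =>
                ((false :: w).count true = a' ∧ (peakSet (false :: w)).card = j) ∧
                (false :: w).getD 0 true = false))
              = (allW (a'+b')).filter (fun w => w.count true = a' ∧ (peakSet w).card = j) := by
            apply Finset.filter_congr
            intro w _
            rw [card_peakSet_cons]
            simp [List.count_cons]
          rw [etrue, efalse]
          have ih3 := (ih (a'+b') hm1_lt a' b' j rfl).1
          rw [ih3]
          simp
      constructor
      · rw [card_filter_allW_succ]
        have efalse : ((allW m).filter (fun w =>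
              (false :: w).count true = a'+1 ∧ (peakSet (false :: w)).card = k))
            = (allW m).filter (fun w => w.count true = a'+1 ∧ (peakSet w).card = k) := by
          apply Finset.filter_congr
          intro w _
          rw [card_peakSet_cons]
          simp [List.count_cons]
        rw [key, efalse]
        have ih1 := (ih m hm_lt (a'+1) b' k (by omega)).1
        rw [show a' + 1 + b' = m by omega] at ih1
        rw [ih1]
        cases k with
        | zero => simp [Tt]
        | succ j =>
          have hT : Tt a' (b'+1) (j+1) = Nat.choose a' (j+1) * Nat.choose b' j := by
            simp [Tt]
          rw [hT, if_neg (Nat.succ_ne_zero j)]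
          simp only [Nat.add_sub_cancel]
          rw [Nat.choose_succ_succ (a'), Nat.choose_succ_succ (b')]
          ring
      · rw [card_filter_allW_succ]
        have efalse : ((allW m).filter (fun w =>
              (false :: w).count true = a'+1 ∧ (peakSet (false :: w)).card = k ∧
                (false :: w).getD 0 false = true)) = ∅ := by
          rw [Finset.filter_eq_empty_iff]
          rintro w _ ⟨_, _, h3⟩
          simp at h3
        have etrue : ((allW m).filter (fun w =>
              (true :: w).count true = a'+1 ∧ (peakSet (true :: w)).card = k ∧
                (true :: w).getD 0 false = true))
            = (allW m).filter (fun w =>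
                (true :: w).count true = a'+1 ∧ (peakSet (true :: w)).card = k) := by
          apply Finset.filter_congr
          intro w _
          simp
        rw [efalse, etrue, key]
        cases k with
        | zero => simp [Tt]
        | succ j =>
          have hT : Tt a' (b'+1) (j+1) = Nat.choose a' (j+1) * Nat.choose b' j := by
            simp [Tt]
          have hT2 : Tt (a'+1) (b'+1) (j+1) = Nat.choose (a'+1) (j+1) * Nat.choose b' j := by
            simp [Tt]
          rw [hT, hT2, if_neg (Nat.succ_ne_zero j)]
          simp only [Nat.add_sub_cancel, Finset.card_empty]
          rw [Nat.choose_succ_succ (a')]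
          ring


/-- The number of lattice paths from (0,0) to (⌈n/2⌉, ⌊n/2⌋) with exactly k peaks is
C(⌈n/2⌉,k)·C(⌊n/2⌋,k). -/
theorem count_grand_paths_with_k_peaks (n k : ℕ) :
    Nat.card {w : List Bool //
        w.length = n ∧ w.count true = n / 2 ∧ (peakSet w).card = k} =
    Nat.choose ((n + 1) / 2) k * Nat.choose (n / 2) k := by
  have h2 : n / 2 + (n + 1) / 2 = n := by omega
  have hmain := (main (n / 2 + (n + 1) / 2) (n / 2) ((n + 1) / 2) k rfl).1
  rw [h2] at hmain
  have e : {w : List Bool //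
        w.length = n ∧ w.count true = n / 2 ∧ (peakSet w).card = k}
      ≃ ((allW n).filter (fun w => w.count true = n / 2 ∧ (peakSet w).card = k) :
          Finset (List Bool)) := by
    apply Equiv.subtypeEquivRight
    intro w
    simp only [Finset.mem_filter, mem_allW]
  rw [Nat.card_congr e, Nat.card_eq_finsetCard, hmain, mul_comm]
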